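/- Let q = 2 and let the design space consist of the three binary design points x_1 = (1, 0)ᵀ, x_2 = (0, 1)ᵀ, x_3 = (1, 1)ᵀ in ℝ². For every t ∈ [0,1), the design measure p_D assigning mass 1/3 to each of x_1, x_2, x_3 is D-optimal: H(p_D) is invertible and det H(p_D) ≥ det H(p) for every design measure p on {x_1, x_2, x_3} with H(p) invertible. -/
import Mathlib


open Matrix BigOperators Finset

noncomputable section

/-- A design measure: nonnegative masses summing to 1. -/
def designMeasure {n : ℕ} (p : Fin n → ℝ) : Prop :=
  (∀ i, 0 ≤ p i) ∧ ∑ i, p i = 1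

/-- G(p) = Σ pᵢ xᵢ xᵢᵀ. -/
def Gmat {q n : ℕ} (x : Fin n → Fin q → ℝ) (p : Fin n → ℝ) : Matrix (Fin q) (Fin q) ℝ :=
  ∑ i, p i • Matrix.vecMulVec (x i) (x i)

/-- g(p) = Σ pᵢ xᵢ. -/
def gvec {q n : ℕ} (x : Fin n → Fin q → ℝ) (p : Fin n → ℝ) : Fin q → ℝ :=
  ∑ i, p i • x i

/-- H(p) = G(p) − t g(p) g(p)ᵀ. -/
def Hmat {q n : ℕ} (t : ℝ) (x : Fin n → Fin q → ℝ) (p : Fin n → ℝ) : Matrix (Fin q) (Fin q) ℝ :=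
  Gmat x p - t • Matrix.vecMulVec (gvec x p) (gvec x p)

/-- ψ_{Di}(p). -/
def psiD {q n : ℕ} (t : ℝ) (x : Fin n → Fin q → ℝ) (p : Fin n → ℝ) (i : Fin n) : ℝ :=
  (1 - t) * (x i ⬝ᵥ ((Hmat t x p)⁻¹ *ᵥ x i))
    + t * ((x i - gvec x p) ⬝ᵥ ((Hmat t x p)⁻¹ *ᵥ (x i - gvec x p)))

/-- ψ_{Ai}(p). -/
def psiA {q n : ℕ} (t : ℝ) (x : Fin n → Fin q → ℝ) (p : Fin n → ℝ) (i : Fin n) : ℝ :=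
  (1 - t) * (x i ⬝ᵥ (((Hmat t x p)⁻¹ * (Hmat t x p)⁻¹) *ᵥ x i))
    + t * ((x i - gvec x p) ⬝ᵥ (((Hmat t x p)⁻¹ * (Hmat t x p)⁻¹) *ᵥ (x i - gvec x p)))

end

lemma detH_aux (t : ℝ) (p : Fin 3 → ℝ) :
    (Hmat t (![![1, 0], ![0, 1], ![1, 1]] : Fin 3 → Fin 2 → ℝ) p).det
    = ((p 0 + p 2) - t * (p 0 + p 2)^2) * ((p 1 + p 2) - t * (p 1 + p 2)^2)
      - (p 2 - t * (p 0 + p 2) * (p 1 + p 2))^2 := by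
  simp [Hmat, Gmat, gvec, Matrix.det_fin_two, Fin.sum_univ_three, Matrix.vecMulVec_apply]
  ring

theorem statement_10 (t : ℝ) (ht0 : 0 ≤ t) (ht1 : t < 1) :
    IsUnit (Hmat t (![![1, 0], ![0, 1], ![1, 1]] : Fin 3 → Fin 2 → ℝ)
        (fun _ => (1/3 : ℝ))).det
    ∧ ∀ p : Fin 3 → ℝ, designMeasure p →
        IsUnit (Hmat t (![![1, 0], ![0, 1], ![1, 1]] : Fin 3 → Fin 2 → ℝ) p).det →
        (Hmat t (![![1, 0], ![0, 1], ![1, 1]] : Fin 3 → Fin 2 → ℝ) p).det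
          ≤ (Hmat t (![![1, 0], ![0, 1], ![1, 1]] : Fin 3 → Fin 2 → ℝ)
              (fun _ => (1/3 : ℝ))).det := by
  have hD : (Hmat t (![![1, 0], ![0, 1], ![1, 1]] : Fin 3 → Fin 2 → ℝ)
      (fun _ => (1/3 : ℝ))).det = (9 - 8*t)/27 := by
    rw [detH_aux]; ring
  refine ⟨?_, ?_⟩
  · rw [hD]
    exact isUnit_iff_ne_zero.mpr (by nlinarith)
  · rintro p ⟨hpos, hsum⟩ _
    rw [hD, detH_aux]
    have h0 := hpos 0
    have h1 := hpos 1
    have h2 := hpos 2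
    rw [Fin.sum_univ_three] at hsum
    set a := p 0 + p 2 with ha
    set b := p 1 + p 2 with hb
    have hc : p 2 = a + b - 1 := by rw [ha, hb]; linarith
    rw [hc]
    have hab1 : 0 ≤ a + b - 1 := by rw [ha, hb]; linarith
    have hab2 : 0 ≤ 7/3 - (a + b) := by rw [ha, hb]; linarith
    have ht1' : 0 ≤ 1 - t := by linarith
    have key : (9 - 8*t)/27
        - ((a - t * a^2) * (b - t * b^2) - (a + b - 1 - t * a * b)^2)
      = (1 - t) * ((a - b)^2/4 + (3/4) * (a + b - 4/3)^2)
        + t * ((a - b)^2 * (a + b - 1)/4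
            + (a + b - 4/3)^2 * (7/3 - (a + b))/4) := by ring
    have hA : 0 ≤ (a - b)^2/4 + (3/4) * (a + b - 4/3)^2 := by positivity
    have hB : 0 ≤ (a - b)^2 * (a + b - 1)/4
        + (a + b - 4/3)^2 * (7/3 - (a + b))/4 := by
      have h3 := mul_nonneg (sq_nonneg (a - b)) hab1
      have h4 := mul_nonneg (sq_nonneg (a + b - 4/3)) hab2
      nlinarith [h3, h4]
    linarith [mul_nonneg ht1' hA, mul_nonneg ht0 hB]
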